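/- For every unit vector x ∈ ℝ^7 (with respect to the Euclidean norm), the alternating bilinear form ω_x(v,w) = φ₀(x,v,w) is nondegenerate on the orthogonal complement x^⊥ of x: for every nonzero v ∈ x^⊥ there exists w ∈ x^⊥ such that φ₀(x,v,w) ≠ 0. (This is the claim that the 2-form ω = (e_r ⌟ φ₀)|_{r=1} induced on the unit 6-sphere by the G₂ structure of ℝ^7 is nondegenerate.) -/

import Mathlib

/-!
The 2-form ω = (e_r ⌟ φ₀)|_{r=1} induced on the unit sphere S⁶ ⊆ ℝ^7 by the G₂
3-form φ₀ is nondegenerate on each tangent space x^⊥.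
-/

noncomputable section

open scoped RealInnerProductSpace

/-- The 3-form `dx_i ∧ dx_j ∧ dx_k` evaluated on vectors `(u,v,w)` of Euclidean ℝ^7. -/
def dx3 (i j k : Fin 7) (u v w : EuclideanSpace ℝ (Fin 7)) : ℝ :=
  u i * (v j * w k - v k * w j) - v i * (u j * w k - u k * w j)
    + w i * (u j * v k - u k * v j)

/-- The G₂ 3-form φ₀ = dx₁₂₃ + dx₁₄₅ + dx₁₆₇ + dx₂₄₆ − dx₂₅₇ − dx₃₄₇ − dx₃₅₆
(0-indexed coordinates). -/
def phi0 (u v w : EuclideanSpace ℝ (Fin 7)) : ℝ :=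
  dx3 0 1 2 u v w + dx3 0 3 4 u v w + dx3 0 5 6 u v w + dx3 1 3 5 u v w
    - dx3 1 4 6 u v w - dx3 2 3 6 u v w - dx3 2 4 5 u v w

/-- Evaluation of a vector literal of length 7 at each index. -/
lemma vec7_eval (a0 a1 a2 a3 a4 a5 a6 : ℝ) :
    (![a0,a1,a2,a3,a4,a5,a6] : Fin 7 → ℝ) 0 = a0 ∧
    (![a0,a1,a2,a3,a4,a5,a6] : Fin 7 → ℝ) 1 = a1 ∧
    (![a0,a1,a2,a3,a4,a5,a6] : Fin 7 → ℝ) 2 = a2 ∧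
    (![a0,a1,a2,a3,a4,a5,a6] : Fin 7 → ℝ) 3 = a3 ∧
    (![a0,a1,a2,a3,a4,a5,a6] : Fin 7 → ℝ) 4 = a4 ∧
    (![a0,a1,a2,a3,a4,a5,a6] : Fin 7 → ℝ) 5 = a5 ∧
    (![a0,a1,a2,a3,a4,a5,a6] : Fin 7 → ℝ) 6 = a6 :=
  ⟨rfl, rfl, rfl, rfl, rfl, rfl, rfl⟩

/-- For every unit vector x ∈ ℝ^7, the alternating bilinear form
ω_x(v,w) = φ₀(x,v,w) is nondegenerate on the orthogonal complement x^⊥: every nonzero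
tangent vector v at x ∈ S⁶ pairs nontrivially with some tangent vector w. -/
theorem sphere_two_form_nondegenerate (x : EuclideanSpace ℝ (Fin 7)) (hx : ‖x‖ = 1)
    (v : EuclideanSpace ℝ (Fin 7)) (hxv : ⟪x, v⟫ = 0) (hv : v ≠ 0) :
    ∃ w : EuclideanSpace ℝ (Fin 7), ⟪x, w⟫ = 0 ∧ phi0 x v w ≠ 0 := by
  set c : Fin 7 → Fin 7 → ℝ := fun a b => x a * v b - x b * v a with hc
  refine ⟨(WithLp.equiv 2 (Fin 7 → ℝ)).symm
    ![c 1 2 + c 3 4 + c 5 6, c 2 0 + c 3 5 - c 4 6, c 0 1 - c 3 6 - c 4 5,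
      c 4 0 + c 5 1 - c 6 2, c 0 3 - c 6 1 - c 5 2, c 6 0 + c 1 3 - c 2 4,
      c 0 5 - c 1 4 - c 2 3], ?_, ?_⟩
  · simp only [PiLp.inner_apply, RCLike.inner_apply, conj_trivial, Fin.sum_univ_seven,
      WithLp.equiv_symm_apply, WithLp.ofLp_toLp, (vec7_eval _ _ _ _ _ _ _).1,
      (vec7_eval _ _ _ _ _ _ _).2.1, (vec7_eval _ _ _ _ _ _ _).2.2.1,
      (vec7_eval _ _ _ _ _ _ _).2.2.2.1, (vec7_eval _ _ _ _ _ _ _).2.2.2.2.1,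
      (vec7_eval _ _ _ _ _ _ _).2.2.2.2.2.1, (vec7_eval _ _ _ _ _ _ _).2.2.2.2.2.2, hc]
    ring
  · have hx2 : x 0 ^ 2 + x 1 ^ 2 + x 2 ^ 2 + x 3 ^ 2 + x 4 ^ 2 + x 5 ^ 2 + x 6 ^ 2 = 1 := by
      have := real_inner_self_eq_norm_sq x
      rw [hx] at this
      simp only [PiLp.inner_apply, RCLike.inner_apply, conj_trivial,
        Fin.sum_univ_seven] at this
      nlinarith [this]
    have hxv' : x 0 * v 0 + x 1 * v 1 + x 2 * v 2 + x 3 * v 3 + x 4 * v 4 + x 5 * v 5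
        + x 6 * v 6 = 0 := by
      simpa [PiLp.inner_apply, RCLike.inner_apply, Fin.sum_univ_seven, mul_comm] using hxv
    have hvpos : 0 < v 0 ^ 2 + v 1 ^ 2 + v 2 ^ 2 + v 3 ^ 2 + v 4 ^ 2 + v 5 ^ 2 + v 6 ^ 2 := by
      have h1 : 0 < ‖v‖ := norm_pos_iff.mpr hv
      have h2 := real_inner_self_eq_norm_sq v
      simp only [PiLp.inner_apply, RCLike.inner_apply, conj_trivial,
        Fin.sum_univ_seven] at h2
      nlinarith [h1, h2]
    have key : phi0 x v ((WithLp.equiv 2 (Fin 7 → ℝ)).symm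
        ![c 1 2 + c 3 4 + c 5 6, c 2 0 + c 3 5 - c 4 6, c 0 1 - c 3 6 - c 4 5,
          c 4 0 + c 5 1 - c 6 2, c 0 3 - c 6 1 - c 5 2, c 6 0 + c 1 3 - c 2 4,
          c 0 5 - c 1 4 - c 2 3])
        = v 0 ^ 2 + v 1 ^ 2 + v 2 ^ 2 + v 3 ^ 2 + v 4 ^ 2 + v 5 ^ 2 + v 6 ^ 2 := by
      simp only [phi0, dx3, WithLp.equiv_symm_apply, WithLp.ofLp_toLp, (vec7_eval _ _ _ _ _ _ _).1,
        (vec7_eval _ _ _ _ _ _ _).2.1, (vec7_eval _ _ _ _ _ _ _).2.2.1,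
        (vec7_eval _ _ _ _ _ _ _).2.2.2.1, (vec7_eval _ _ _ _ _ _ _).2.2.2.2.1,
        (vec7_eval _ _ _ _ _ _ _).2.2.2.2.2.1, (vec7_eval _ _ _ _ _ _ _).2.2.2.2.2.2, hc]
      linear_combination (v 0 ^ 2 + v 1 ^ 2 + v 2 ^ 2 + v 3 ^ 2 + v 4 ^ 2 + v 5 ^ 2
          + v 6 ^ 2) * hx2
        - (x 0 * v 0 + x 1 * v 1 + x 2 * v 2 + x 3 * v 3 + x 4 * v 4 + x 5 * v 5
          + x 6 * v 6) * hxv'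
    rw [key]
    exact ne_of_gt hvpos

end
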